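/- There exists a family of graphs G_n on Θ(n) vertices and minimal star forest vertex deletion sets X_n of G_n (in fact |X_n| = 1) and a vertex r ∈ X_n such that the number of inclusion-minimal vertex sets Y ⊆ V(G_n) \ {r} with G_n − ((X_n \ {r}) ∪ Y) a star forest is at least 2^n. Concretely: take the star K_{1,2n} with center r and leaves v_1,…,v_{2n}, add edges {v_{2i−1}, v_{2i}} for 1 ≤ i ≤ n; then X = {r} is a minimal star forest vertex deletion set and there are at least 2^n minimal such sets Y. -/

import Mathlib

/-- Every connected component of `H` is a star. -/
def IsStarForest {V : Type*} (H : SimpleGraph V) : Prop :=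
  ∀ u v : V, H.Adj u v → ((∀ w, H.Adj u w → w = v) ∨ (∀ w, H.Adj v w → w = u))

/-- The star `K_{1,2n}` with center `none` and leaves `some i`, together with a
perfect matching on the leaves pairing `v_{2i-1}` with `v_{2i}`. -/
def Gstar (n : ℕ) : SimpleGraph (Option (Fin (2 * n))) :=
  SimpleGraph.fromRel (fun a b =>
    a = none ∨ (∃ i j : Fin (2 * n), a = some i ∧ b = some j ∧
      (i : ℕ) / 2 = (j : ℕ) / 2))

lemma gstar_adj {n : ℕ} {a b : Option (Fin (2 * n))} :
    (Gstar n).Adj a b ↔ a ≠ b ∧ (a = none ∨ b = none ∨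
      ∃ i j : Fin (2 * n), a = some i ∧ b = some j ∧ (i : ℕ) / 2 = (j : ℕ) / 2) := by
  rw [Gstar, SimpleGraph.fromRel_adj]
  constructor
  · rintro ⟨hab, (h | ⟨i, j, hi, hj, hij⟩) | (h | ⟨i, j, hi, hj, hij⟩)⟩
    · exact ⟨hab, Or.inl h⟩
    · exact ⟨hab, Or.inr (Or.inr ⟨i, j, hi, hj, hij⟩)⟩
    · exact ⟨hab, Or.inr (Or.inl h)⟩
    · exact ⟨hab, Or.inr (Or.inr ⟨j, i, hj, hi, hij.symm⟩)⟩
  · rintro ⟨hab, h | h | h⟩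
    · exact ⟨hab, Or.inl (Or.inl h)⟩
    · exact ⟨hab, Or.inr (Or.inl h)⟩
    · exact ⟨hab, Or.inl (Or.inr h)⟩

lemma isStarForest_iff {n : ℕ} (D : Set (Option (Fin (2 * n)))) (hD : none ∉ D) :
    IsStarForest ((Gstar n).induce Dᶜ) ↔
      ∀ i j : Fin (2 * n), i ≠ j → (i : ℕ) / 2 = (j : ℕ) / 2 →
        some i ∈ D ∨ some j ∈ D := by
  have hnone : (none : Option (Fin (2 * n))) ∈ Dᶜ := hD
  constructor
  · intro h i j hij hdiv
    by_contra hc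
    push_neg at hc
    obtain ⟨hi, hj⟩ := hc
    set u : ↥Dᶜ := ⟨some i, hi⟩
    set v : ↥Dᶜ := ⟨some j, hj⟩
    set z : ↥Dᶜ := ⟨none, hnone⟩
    have hadj : ((Gstar n).induce Dᶜ).Adj u v := by
      show (Gstar n).Adj (some i) (some j)
      exact gstar_adj.mpr ⟨by simpa using hij, Or.inr (Or.inr ⟨i, j, rfl, rfl, hdiv⟩)⟩
    have huz : ((Gstar n).induce Dᶜ).Adj u z := by
      show (Gstar n).Adj (some i) none
      exact gstar_adj.mpr ⟨by simp, Or.inr (Or.inl rfl)⟩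
    have hvz : ((Gstar n).induce Dᶜ).Adj v z := by
      show (Gstar n).Adj (some j) none
      exact gstar_adj.mpr ⟨by simp, Or.inr (Or.inl rfl)⟩
    rcases h u v hadj with h1 | h1
    · have := h1 z huz
      simp [z, v, Subtype.ext_iff] at this
    · have := h1 z hvz
      simp [z, u, Subtype.ext_iff] at this
  · intro h u v hadj
    have hadj' : (Gstar n).Adj (u : Option (Fin (2 * n))) (v : Option (Fin (2 * n))) := hadj
    rw [gstar_adj] at hadj'
    obtain ⟨hne, hcase⟩ := hadj'
    rcases hcase with hu | hv | ⟨i, j, hi, hj, hdiv⟩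
    · -- u = none; show all neighbors of v equal u
      right
      intro w hw
      have hw' : (Gstar n).Adj (v : Option (Fin (2 * n))) (w : Option (Fin (2 * n))) := hw
      rw [gstar_adj] at hw'
      obtain ⟨hne2, hc⟩ := hw'
      rcases hc with hv | hwn | ⟨a, b, ha, hb, hab⟩
      · exact absurd (hu.trans hv.symm) hne
      · exact Subtype.ext (hwn.trans hu.symm)
      · exfalso
        have hva : (v : Option (Fin (2 * n))) ∈ Dᶜ := v.2
        have hwb : (w : Option (Fin (2 * n))) ∈ Dᶜ := w.2
        rw [ha] at hva
        rw [hb] at hwb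
        have hab' : a ≠ b := by
          intro hh; apply hne2; rw [ha, hb, hh]
        rcases h a b hab' hab with hx | hx
        · exact hva hx
        · exact hwb hx
    · -- v = none
      left
      intro w hw
      have hw' : (Gstar n).Adj (u : Option (Fin (2 * n))) (w : Option (Fin (2 * n))) := hw
      rw [gstar_adj] at hw'
      obtain ⟨hne2, hc⟩ := hw'
      rcases hc with hu | hwn | ⟨a, b, ha, hb, hab⟩
      · exact absurd (hu.trans hv.symm) hne
      · exact Subtype.ext (hwn.trans hv.symm)
      · exfalso
        have hua : (u : Option (Fin (2 * n))) ∈ Dᶜ := u.2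
        have hwb : (w : Option (Fin (2 * n))) ∈ Dᶜ := w.2
        rw [ha] at hua
        rw [hb] at hwb
        have hab' : a ≠ b := by
          intro hh; apply hne2; rw [ha, hb, hh]
        rcases h a b hab' hab with hx | hx
        · exact hua hx
        · exact hwb hx
    · -- both leaves in same pair: contradiction
      exfalso
      have hua : (u : Option (Fin (2 * n))) ∈ Dᶜ := u.2
      have hvb : (v : Option (Fin (2 * n))) ∈ Dᶜ := v.2
      rw [hi] at hua
      rw [hj] at hvb
      have hij : i ≠ j := by
        intro hh; apply hne; rw [hi, hj, hh]
      rcases h i j hij hdiv with hx | hx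
      · exact hua hx
      · exact hvb hx

lemma matching_isStarForest {n : ℕ} :
    IsStarForest ((Gstar n).induce (({none} : Set (Option (Fin (2 * n))))ᶜ)) := by
  intro u v hadj
  have hadj' : (Gstar n).Adj (u : Option (Fin (2 * n))) (v : Option (Fin (2 * n))) := hadj
  rw [gstar_adj] at hadj'
  obtain ⟨hne, hc⟩ := hadj'
  have hu : (u : Option (Fin (2 * n))) ≠ none := fun h => u.2 (by simp [h])
  have hv : (v : Option (Fin (2 * n))) ≠ none := fun h => v.2 (by simp [h])
  rcases hc with h | h | ⟨i, j, hi, hj, hdiv⟩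
  · exact absurd h hu
  · exact absurd h hv
  left
  intro w hw
  have hw' : (Gstar n).Adj (u : Option (Fin (2 * n))) (w : Option (Fin (2 * n))) := hw
  rw [gstar_adj] at hw'
  obtain ⟨hne2, hc⟩ := hw'
  have hwn : (w : Option (Fin (2 * n))) ≠ none := fun h => w.2 (by simp [h])
  rcases hc with h | h | ⟨a, b, ha, hb, hab⟩
  · exact absurd h hu
  · exact absurd h hwn
  · -- a = i (from ha, hi), and b ≠ a, b/2 = a/2, j ≠ i, j/2 = i/2 ⟹ b = j
    have hai : a = i := by
      rw [hi] at ha; exact (Option.some_injective _ ha).symm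
    subst hai
    have hbj : (b : ℕ) = (j : ℕ) := by
      have hne3 : (b : ℕ) ≠ (a : ℕ) := by
        intro hh
        apply hne2
        rw [ha, hb, Fin.ext (hh : (b:ℕ) = (a:ℕ))]
      have hne4 : (j : ℕ) ≠ (a : ℕ) := by
        intro hh
        apply hne
        rw [hi, hj, Fin.ext (hh : (j:ℕ) = (a:ℕ))]
      omega
    exact Subtype.ext (hb.trans (by rw [Fin.ext hbj, hj]))

/-- The deletion set picking one leaf per matching edge according to `f`. -/
def Yf {n : ℕ} (f : Fin n → Bool) : Set (Option (Fin (2 * n))) :=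
  {x | ∃ i : Fin (2 * n), x = some i ∧
    f ⟨(i : ℕ) / 2, by have := i.isLt; omega⟩ = decide ((i : ℕ) % 2 = 0)}

lemma mem_Yf {n : ℕ} (f : Fin n → Bool) (i : Fin (2 * n)) :
    some i ∈ Yf f ↔ f ⟨(i : ℕ) / 2, by have := i.isLt; omega⟩ = decide ((i : ℕ) % 2 = 0) := by
  constructor
  · rintro ⟨j, hj, hfj⟩
    obtain rfl : j = i := (Option.some_injective _ hj).symm
    exact hfj
  · intro hf
    exact ⟨i, rfl, hf⟩

lemma none_not_mem_Yf {n : ℕ} (f : Fin n → Bool) : none ∉ Yf f := by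
  rintro ⟨i, hi, -⟩
  exact Option.some_ne_none i hi.symm

lemma Yf_injective {n : ℕ} : Function.Injective (Yf (n := n)) := by
  intro f g hfg
  funext k
  have hk : 2 * (k : ℕ) < 2 * n := by have := k.isLt; omega
  set i : Fin (2 * n) := ⟨2 * (k : ℕ), hk⟩
  have h1 := mem_Yf f i
  have h2 := mem_Yf g i
  rw [hfg] at h1
  have hik : (⟨(i : ℕ) / 2, by have := i.isLt; omega⟩ : Fin n) = k := by
    apply Fin.ext; show (2 * (k : ℕ)) / 2 = k; omega
  have hd : decide ((i : ℕ) % 2 = 0) = true := by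
    show decide ((2 * (k : ℕ)) % 2 = 0) = true
    rw [decide_eq_true_eq]; omega
  rw [hik, hd] at h1 h2
  by_cases hg : g k = true
  · rw [h1.mp (h2.mpr hg), hg]
  · have hf : ¬ f k = true := fun hh => hg (h2.mp (h1.mpr hh))
    rw [Bool.not_eq_true] at hg hf
    rw [hf, hg]

lemma Yf_hits {n : ℕ} (f : Fin n → Bool) (i j : Fin (2 * n)) (hij : i ≠ j)
    (hdiv : (i : ℕ) / 2 = (j : ℕ) / 2) : some i ∈ Yf f ∨ some j ∈ Yf f := by
  have hi2 := i.isLt; have hj2 := j.isLt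
  have hne : (i : ℕ) ≠ (j : ℕ) := fun h => hij (Fin.ext h)
  rw [mem_Yf, mem_Yf]
  have hkk : (⟨(i : ℕ) / 2, by omega⟩ : Fin n) = ⟨(j : ℕ) / 2, by omega⟩ := Fin.ext hdiv
  rw [hkk]
  rcases (by omega : ((i:ℕ)%2 = 0 ∧ (j:ℕ)%2 = 1) ∨ ((i:ℕ)%2 = 1 ∧ (j:ℕ)%2 = 0)) with
    ⟨h1, h2⟩ | ⟨h1, h2⟩ <;>
  · simp only [h1, h2]
    cases f ⟨(j : ℕ) / 2, by omega⟩ <;> simp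

lemma Yf_partner_not_mem {n : ℕ} (f : Fin n → Bool) (i : Fin (2 * n))
    (hi : some i ∈ Yf f) :
    ∃ j : Fin (2 * n), j ≠ i ∧ (j : ℕ) / 2 = (i : ℕ) / 2 ∧ some j ∉ Yf f := by
  have hi2 := i.isLt
  have hjlt : (if (i : ℕ) % 2 = 0 then (i : ℕ) + 1 else (i : ℕ) - 1) < 2 * n := by
    split <;> omega
  set jv := if (i : ℕ) % 2 = 0 then (i : ℕ) + 1 else (i : ℕ) - 1 with hjv
  have hjne : jv ≠ (i : ℕ) := by rw [hjv]; split <;> omega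
  have hjdiv : jv / 2 = (i : ℕ) / 2 := by rw [hjv]; split <;> omega
  have hjpar : (jv % 2 = 0) ↔ ¬ ((i : ℕ) % 2 = 0) := by rw [hjv]; constructor <;> (split <;> omega)
  refine ⟨⟨jv, hjlt⟩, fun h => hjne (congrArg Fin.val h), hjdiv, ?_⟩
  intro hj
  rw [mem_Yf] at hi hj
  have hkk : (⟨jv / 2, by omega⟩ : Fin n) = ⟨(i : ℕ) / 2, by omega⟩ := Fin.ext hjdiv
  rw [hkk] at hj
  rw [hj] at hi
  rcases (by omega : (i : ℕ) % 2 = 0 ∨ (i : ℕ) % 2 = 1) with h | h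
  · have : ¬ (jv % 2 = 0) := by omega
    simp [h, this] at hi
  · have : jv % 2 = 0 := by omega
    simp [h, this] at hi

theorem stmt7 (n : ℕ) (hn : 1 ≤ n) :
    IsStarForest ((Gstar n).induce (({none} : Set (Option (Fin (2 * n))))ᶜ)) ∧
    (∀ S : Set (Option (Fin (2 * n))), S ⊂ {none} →
      ¬ IsStarForest ((Gstar n).induce Sᶜ)) ∧
    2 ^ n ≤ {Y : Set (Option (Fin (2 * n))) | none ∉ Y ∧
        IsStarForest ((Gstar n).induce
          (((({none} : Set (Option (Fin (2 * n)))) \ {none}) ∪ Y)ᶜ)) ∧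
        ∀ Y' ⊂ Y, ¬ IsStarForest ((Gstar n).induce
          (((({none} : Set (Option (Fin (2 * n)))) \ {none}) ∪ Y')ᶜ))}.ncard := by
  refine ⟨matching_isStarForest, ?_, ?_⟩
  · intro S hS
    have hS0 : S = ∅ := by
      rcases Set.subset_singleton_iff_eq.mp hS.subset with h | h
      · exact h
      · exact absurd h hS.ne
    subst hS0
    rw [isStarForest_iff ∅ (by simp)]
    intro h
    have h01 := h ⟨0, by omega⟩ ⟨1, by omega⟩ (by simp [Fin.ext_iff]) (by simp)
    simp at h01
  · set S : Set (Set (Option (Fin (2 * n)))) := {Y | none ∉ Y ∧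
        IsStarForest ((Gstar n).induce
          (((({none} : Set (Option (Fin (2 * n)))) \ {none}) ∪ Y)ᶜ)) ∧
        ∀ Y' ⊂ Y, ¬ IsStarForest ((Gstar n).induce
          (((({none} : Set (Option (Fin (2 * n)))) \ {none}) ∪ Y')ᶜ))} with hSdef
    have hmem : ∀ f : Fin n → Bool, Yf f ∈ S := by
      intro f
      refine ⟨none_not_mem_Yf f, ?_, ?_⟩
      · rw [show (({none} : Set (Option (Fin (2 * n)))) \ {none}) ∪ Yf f = Yf f by simp,
          isStarForest_iff _ (none_not_mem_Yf f)]
        exact fun i j hij hdiv => Yf_hits f i j hij hdiv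
      · intro Y' hY'
        rw [show (({none} : Set (Option (Fin (2 * n)))) \ {none}) ∪ Y' = Y' by simp]
        have hY'none : none ∉ Y' := fun h => none_not_mem_Yf f (hY'.subset h)
        rw [isStarForest_iff _ hY'none]
        intro h
        obtain ⟨x, hxY, hxY'⟩ := Set.exists_of_ssubset hY'
        obtain ⟨i, rfl, hfi⟩ := hxY
        obtain ⟨j, hji, hjdiv, hj⟩ := Yf_partner_not_mem f i ⟨i, rfl, hfi⟩
        have hj' : some j ∉ Y' := fun h => hj (hY'.subset h)
        rcases h i j (fun h => hji h.symm) hjdiv.symm with h | h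
        · exact hxY' h
        · exact hj' h
    have hinj : Function.Injective (fun f : Fin n → Bool => (⟨Yf f, hmem f⟩ : ↥S)) := by
      intro f g hfg
      exact Yf_injective (congrArg Subtype.val hfg)
    have hfin : Finite ↥S := Set.Finite.to_subtype (Set.toFinite S)
    have hle : Nat.card (Fin n → Bool) ≤ Nat.card ↥S :=
      Nat.card_le_card_of_injective _ hinj
    have hcard : Nat.card (Fin n → Bool) = 2 ^ n := by
      simp [Nat.card_eq_fintype_card]
    rw [hcard, Nat.card_coe_set_eq] at hle
    exact hle
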